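/- Let k₁, k₂ ≥ 1 be integers and ξ ∈ ℝ with ξ ≠ 0. If u ∈ 𝒮(ℝ) satisfies −u''(t) + ξ²·(t^(2k₁) + t^(2k₂))·u(t) − k₁·ξ·t^(k₁−1)·u(t) = 0 for all t ∈ ℝ, then u = 0. -/

import Mathlib

open Filter Complex


/-- Let `k₁, k₂ ≥ 1` be integers and `ξ ∈ ℝ` with `ξ ≠ 0`. If `u ∈ 𝒮(ℝ)`
satisfies `−u''(t) + ξ²·(t^(2k₁) + t^(2k₂))·u(t) − k₁·ξ·t^(k₁−1)·u(t) = 0` for all `t ∈ ℝ`,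
then `u = 0`. -/
theorem stmt_4 (k₁ k₂ : ℕ) (hk₁ : 1 ≤ k₁) (hk₂ : 1 ≤ k₂) (ξ : ℝ) (hξ : ξ ≠ 0)
    (u : SchwartzMap ℝ ℂ)
    (hu : ∀ t : ℝ,
      -(deriv (deriv (⇑u)) t) + (ξ : ℂ) ^ 2 * ((t : ℂ) ^ (2 * k₁) + (t : ℂ) ^ (2 * k₂)) * u t
        - (k₁ : ℂ) * (ξ : ℂ) * (t : ℂ) ^ (k₁ - 1) * u t = 0) :
    u = 0 := by
  -- the first derivative of u, as a Schwartz map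
  set U1 : SchwartzMap ℝ ℂ := SchwartzMap.derivCLM ℝ ℂ u with hU1
  have hU1c : ∀ t, U1 t = deriv (⇑u) t := fun t => SchwartzMap.derivCLM_apply ℝ u t
  -- v = u' + ξ t^k₁ u
  set v : ℝ → ℂ := fun t => deriv (⇑u) t + (ξ : ℂ) * (t : ℂ) ^ k₁ * u t with hvdef
  set F : ℝ → ℝ := fun t => ((starRingEnd ℂ) (v t) * u t).re with hFdef
  have hderiv_u : ∀ t : ℝ, HasDerivAt (⇑u) (deriv (⇑u) t) t := fun t =>
    u.differentiableAt.hasDerivAt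
  have hderiv_u' : ∀ t : ℝ, HasDerivAt (deriv ⇑u) (deriv (deriv ⇑u) t) t := by
    intro t
    have : deriv ⇑u = ⇑U1 := by funext s; rw [hU1c s]
    rw [this]
    exact U1.differentiableAt.hasDerivAt
  have hODE : ∀ t : ℝ, deriv (deriv ⇑u) t
      = (ξ : ℂ) ^ 2 * ((t : ℂ) ^ (2 * k₁) + (t : ℂ) ^ (2 * k₂)) * u t
        - (k₁ : ℂ) * (ξ : ℂ) * (t : ℂ) ^ (k₁ - 1) * u t := by
    intro t
    have := hu t
    linear_combination -this
  -- derivative of v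
  have hvd : ∀ t : ℝ, HasDerivAt v
      ((ξ : ℂ) * (t : ℂ) ^ k₁ * v t + (ξ : ℂ) ^ 2 * (t : ℂ) ^ (2 * k₂) * u t) t := by
    intro t
    have hp : HasDerivAt (fun x : ℝ => (x : ℂ) ^ k₁) ((k₁ : ℂ) * (t : ℂ) ^ (k₁ - 1)) t :=
      (hasDerivAt_pow k₁ (t : ℂ)).comp_ofReal
    have h1 : HasDerivAt (fun x : ℝ => (ξ : ℂ) * (x : ℂ) ^ k₁)
        ((ξ : ℂ) * ((k₁ : ℂ) * (t : ℂ) ^ (k₁ - 1))) t := hp.const_mul _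
    have h2 := (hderiv_u' t).add (h1.mul (hderiv_u t))
    convert h2 using 1
    · rfl
    · rfl
    rw [hODE t, hvdef]
    have hpm : (t : ℂ) ^ (2 * k₁) = ((t : ℂ) ^ k₁) ^ 2 := by rw [← pow_mul, mul_comm]
    rw [hpm]
    ring
  -- derivative of F
  have hFd : ∀ t : ℝ, HasDerivAt F (‖v t‖ ^ 2 + ξ ^ 2 * t ^ (2 * k₂) * ‖u t‖ ^ 2) t := by
    intro t
    have hG : HasDerivAt (fun s => (starRingEnd ℂ) (v s) * u s)
        ((starRingEnd ℂ) ((ξ : ℂ) * (t : ℂ) ^ k₁ * v t + (ξ : ℂ) ^ 2 * (t : ℂ) ^ (2 * k₂) * u t)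
            * u t + (starRingEnd ℂ) (v t) * deriv (⇑u) t) t := by
      have := ((hvd t).star.mul (hderiv_u t))
      simp [Complex.star_def] at this ⊢
      exact this
    have hF' := Complex.reCLM.hasFDerivAt.comp_hasDerivAt t hG
    convert hF' using 1
    · rfl
    · rfl
    · rfl
    have hd : deriv (⇑u) t = v t - (ξ : ℂ) * (t : ℂ) ^ k₁ * u t := by rw [hvdef]; ring
    rw [hd]
    have hcalc : (starRingEnd ℂ)
          ((ξ : ℂ) * (t : ℂ) ^ k₁ * v t + (ξ : ℂ) ^ 2 * (t : ℂ) ^ (2 * k₂) * u t) * u t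
        + (starRingEnd ℂ) (v t) * (v t - (ξ : ℂ) * (t : ℂ) ^ k₁ * u t)
        = ((ξ ^ 2 * t ^ (2 * k₂) : ℝ) : ℂ) * ((starRingEnd ℂ) (u t) * u t)
          + (starRingEnd ℂ) (v t) * v t := by
      simp only [map_add, map_mul, map_pow, Complex.conj_ofReal]
      push_cast
      ring
    have h1 : ∀ z : ℂ, (starRingEnd ℂ) z * z = ((‖z‖ ^ 2 : ℝ) : ℂ) := fun z => by
      rw [mul_comm, Complex.mul_conj, Complex.normSq_eq_norm_sq]
    have hre : (((ξ ^ 2 * t ^ (2 * k₂) : ℝ)) : ℂ) * ((‖u t‖ ^ 2 : ℝ) : ℂ) + ((‖v t‖ ^ 2 : ℝ) : ℂ)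
        = ((ξ ^ 2 * t ^ (2 * k₂) * ‖u t‖ ^ 2 + ‖v t‖ ^ 2 : ℝ) : ℂ) := by push_cast; ring
    rw [hcalc, h1, h1, hre, Complex.reCLM_apply, Complex.ofReal_re]
    try ring
  -- decay bounds
  obtain ⟨C₁, _, hC₁⟩ := u.decay 1 0
  obtain ⟨C₂, _, hC₂⟩ := u.decay (k₁ + 1) 0
  obtain ⟨C₃, _, hC₃⟩ := U1.decay 1 0
  simp only [norm_iteratedFDeriv_zero] at hC₁ hC₂ hC₃
  set D : ℝ := (C₃ + |ξ| * C₂) * C₁ with hD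
  have hbound : ∀ x : ℝ, 1 ≤ |x| → |F x| ≤ D / |x| ^ 2 := by
    intro x hx
    have hxpos : (0:ℝ) < |x| := lt_of_lt_of_le one_pos hx
    have hux : ‖u x‖ ≤ C₁ / |x| := by
      rw [le_div_iff₀ hxpos]
      have := hC₁ x
      simpa [Real.norm_eq_abs, mul_comm] using this
    have hux2 : |x| ^ k₁ * ‖u x‖ ≤ C₂ / |x| := by
      rw [le_div_iff₀ hxpos]
      have := hC₂ x
      calc |x| ^ k₁ * ‖u x‖ * |x| = |x| ^ (k₁ + 1) * ‖u x‖ := by ring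
        _ ≤ C₂ := by simpa [Real.norm_eq_abs] using this
    have hu'x : ‖deriv (⇑u) x‖ ≤ C₃ / |x| := by
      rw [le_div_iff₀ hxpos]
      have := hC₃ x
      rw [hU1c] at this
      simpa [Real.norm_eq_abs, mul_comm] using this
    have hvx : ‖v x‖ ≤ (C₃ + |ξ| * C₂) / |x| := by
      rw [hvdef]
      calc ‖deriv (⇑u) x + (ξ : ℂ) * (x : ℂ) ^ k₁ * u x‖
          ≤ ‖deriv (⇑u) x‖ + ‖(ξ : ℂ) * (x : ℂ) ^ k₁ * u x‖ := norm_add_le _ _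
        _ = ‖deriv (⇑u) x‖ + |ξ| * (|x| ^ k₁ * ‖u x‖) := by
            rw [norm_mul, norm_mul, Complex.norm_real, norm_pow, Complex.norm_real,
              Real.norm_eq_abs, Real.norm_eq_abs, mul_assoc]
        _ ≤ C₃ / |x| + |ξ| * (C₂ / |x|) := by gcongr
        _ = (C₃ + |ξ| * C₂) / |x| := by ring
    have : |F x| ≤ ‖v x‖ * ‖u x‖ := by
      rw [hFdef]
      calc |((starRingEnd ℂ) (v x) * u x).re| ≤ ‖(starRingEnd ℂ) (v x) * u x‖ :=
            Complex.abs_re_le_norm _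
        _ = ‖v x‖ * ‖u x‖ := by rw [norm_mul, RCLike.norm_conj]
    calc |F x| ≤ ‖v x‖ * ‖u x‖ := this
      _ ≤ ((C₃ + |ξ| * C₂) / |x|) * (C₁ / |x|) :=
          mul_le_mul hvx hux (norm_nonneg _) ((norm_nonneg _).trans hvx)
      _ = D / |x| ^ 2 := by rw [hD]; field_simp
  -- F tends to 0 at ±∞
  have hDtend : Tendsto (fun x : ℝ => D / |x| ^ 2) atTop (nhds 0) := by
    apply Tendsto.div_atTop (tendsto_const_nhds)
    exact (tendsto_pow_atTop (by norm_num)).comp tendsto_abs_atTop_atTop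
  have hDtendb : Tendsto (fun x : ℝ => D / |x| ^ 2) atBot (nhds 0) := by
    apply Tendsto.div_atTop (tendsto_const_nhds)
    exact (tendsto_pow_atTop (by norm_num)).comp tendsto_abs_atBot_atTop
  have htop : Tendsto F atTop (nhds 0) := by
    apply squeeze_zero_norm' _ hDtend
    filter_upwards [eventually_ge_atTop (1:ℝ)] with x hx
    exact hbound x (le_trans hx (le_abs_self x))
  have hbot : Tendsto F atBot (nhds 0) := by
    apply squeeze_zero_norm' _ hDtendb
    filter_upwards [eventually_le_atBot (-1:ℝ)] with x hx
    refine hbound x ?_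
    rw [abs_of_nonpos (le_trans hx (by norm_num))]
    linarith
  -- F is monotone
  have hFd_nonneg : ∀ t : ℝ, 0 ≤ ‖v t‖ ^ 2 + ξ ^ 2 * t ^ (2 * k₂) * ‖u t‖ ^ 2 := by
    intro t
    have h1 : (0:ℝ) ≤ t ^ (2 * k₂) := by
      rw [mul_comm, pow_mul]; positivity
    positivity
  have hmono : Monotone F := by
    apply monotone_of_deriv_nonneg
    · exact fun t => (hFd t).differentiableAt
    · intro t
      rw [(hFd t).deriv]
      exact hFd_nonneg t
  -- F ≡ 0
  have hF0 : ∀ t, F t = 0 := by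
    intro t
    have h1 : F t ≤ 0 := hmono.ge_of_tendsto htop t
    have h2 : 0 ≤ F t := hmono.le_of_tendsto hbot t
    linarith
  -- hence deriv F ≡ 0 and u t = 0 for t ≠ 0
  have hzero : ∀ t : ℝ, ‖v t‖ ^ 2 + ξ ^ 2 * t ^ (2 * k₂) * ‖u t‖ ^ 2 = 0 := by
    intro t
    have hFconst : F = fun _ => (0:ℝ) := funext hF0
    have h0 : HasDerivAt F 0 t := by
      rw [hFconst]; exact hasDerivAt_const t 0
    exact (hFd t).unique h0
  have huzero : ∀ t : ℝ, t ≠ 0 → u t = 0 := by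
    intro t ht
    have h := hzero t
    have h1 : (0:ℝ) ≤ ‖v t‖ ^ 2 := sq_nonneg _
    have h2 : ξ ^ 2 * t ^ (2 * k₂) * ‖u t‖ ^ 2 ≤ 0 := by linarith
    have hpos : 0 < ξ ^ 2 * t ^ (2 * k₂) := by
      have : 0 < t ^ (2 * k₂) := by
        rw [mul_comm, pow_mul]
        positivity
      positivity
    have : ‖u t‖ ^ 2 ≤ 0 := nonpos_of_mul_nonpos_right (by linarith [mul_nonneg hpos.le (sq_nonneg ‖u t‖)]) hpos
    have : ‖u t‖ = 0 := by nlinarith [sq_nonneg ‖u t‖, norm_nonneg (u t)]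
    exact norm_eq_zero.mp this
  have hu0 : u 0 = 0 := by
    have hc : Tendsto ⇑u (nhdsWithin 0 {(0:ℝ)}ᶜ) (nhds (u 0)) :=
      (u.continuous.continuousAt).continuousWithinAt
    have hc2 : Tendsto ⇑u (nhdsWithin 0 {(0:ℝ)}ᶜ) (nhds 0) := by
      apply Tendsto.congr' _ tendsto_const_nhds
      filter_upwards [self_mem_nhdsWithin] with x hx
      exact (huzero x hx).symm
    exact tendsto_nhds_unique hc hc2
  ext t
  by_cases ht : t = 0
  · subst ht; simpa using hu0
  · simpa using huzero t ht
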